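/- Fix α ≥ 1, 0 < k < l, p > 1, β = 1 + p(α−1), and let F, G be as in Serrin's construction: F(x) = x^α on [k,l], extended linearly for x > l, and G(x) = sign(x)(F(x̄)|F'(x̄)|^{p-1} − α^{p-1}k^β) with x̄ = |x| + k. Then G is differentiable at every x with |x| ≠ l − k, and G'(x) = (β/α)|F'(x̄)|^p if |x| < l − k, while G'(x) = |F'(x̄)|^p if |x| > l − k. -/

import Mathlib

open Set Filter Topology

private lemma rpow_sub_one_mul {c p : ℝ} (hc : 0 < c) : c ^ (p - 1) * c = c ^ p := by
  have h := Real.rpow_add hc (p - 1) 1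
  rw [Real.rpow_one, sub_add_cancel] at h
  exact h.symm

private lemma aux1 {α p β k : ℝ} (hα : 1 ≤ α) (hk : 0 < k) (hβ : β = 1 + p * (α - 1))
    (t : ℝ) (ht : 0 ≤ t) :
    (t + k) ^ α * |α * (t + k) ^ (α - 1)| ^ (p - 1) = α ^ (p - 1) * (t + k) ^ β := by
  have htk : 0 < t + k := by linarith
  have hα0 : (0:ℝ) < α := by linarith
  rw [abs_of_nonneg (by positivity), Real.mul_rpow hα0.le (by positivity),
      ← Real.rpow_mul htk.le]
  have h : (t + k) ^ α * (t + k) ^ ((α - 1) * (p - 1)) = (t + k) ^ β := by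
    rw [← Real.rpow_add htk]; congr 1; rw [hβ]; ring
  linear_combination (α ^ (p - 1)) * h

private lemma aux2 {α p β k : ℝ} (hα : 1 ≤ α) (hk : 0 < k) (hβ : β = 1 + p * (α - 1))
    (t : ℝ) (ht : 0 ≤ t) :
    (β / α) * |α * (t + k) ^ (α - 1)| ^ p = β * α ^ (p - 1) * (t + k) ^ (β - 1) := by
  have htk : 0 < t + k := by linarith
  have hα0 : (0:ℝ) < α := by linarith
  rw [abs_of_nonneg (by positivity), Real.mul_rpow hα0.le (by positivity),
      ← Real.rpow_mul htk.le]
  have h1 : (α:ℝ) ^ p = α ^ (p - 1) * α := (rpow_sub_one_mul hα0).symm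
  have h2 : (α - 1) * p = β - 1 := by rw [hβ]; ring
  rw [h2, h1]
  field_simp

/-- Serrin's auxiliary function `G` is differentiable away from `|x| = l - k`, with
`G' = (β/α)|F'(x̄)|^p` for `|x| < l - k` and `G' = |F'(x̄)|^p` for `|x| > l - k`. -/
theorem serrin_G_deriv (α k l p β : ℝ) (hα : 1 ≤ α) (hk : 0 < k) (hkl : k < l)
    (hp : 1 < p) (hβ : β = 1 + p * (α - 1))
    (F F' G : ℝ → ℝ)
    (hF : ∀ x, k ≤ x → F x = if x ≤ l then x ^ α else l ^ (α - 1) * (α * x - (α - 1) * l))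
    (hF' : ∀ x, k ≤ x → F' x = if x ≤ l then α * x ^ (α - 1) else α * l ^ (α - 1))
    (hG : ∀ x : ℝ, G x = Real.sign x *
      (F (|x| + k) * |F' (|x| + k)| ^ (p - 1) - α ^ (p - 1) * k ^ β)) :
    ∀ x : ℝ, (|x| < l - k → HasDerivAt G ((β / α) * |F' (|x| + k)| ^ p) x) ∧
      (l - k < |x| → HasDerivAt G (|F' (|x| + k)| ^ p) x) := by
  have hα0 : (0:ℝ) < α := by linarith
  have hl : 0 < l := hk.trans hkl
  have hkx : ∀ y : ℝ, k ≤ |y| + k := fun y => le_add_of_nonneg_left (abs_nonneg y)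
  intro x
  constructor
  · -- inner case
    intro hx
    have hGeq : ∀ y : ℝ, |y| < l - k →
        G y = Real.sign y * (α ^ (p - 1) * ((|y| + k) ^ β - k ^ β)) := by
      intro y hy
      rw [hG y, hF _ (hkx y), hF' _ (hkx y), if_pos (by linarith), if_pos (by linarith),
        aux1 hα hk hβ |y| (abs_nonneg y)]
      ring
    rw [hF' _ (hkx x), if_pos (by linarith), aux2 hα hk hβ |x| (abs_nonneg x)]
    have hopen : ∀ᶠ y in 𝓝 x, |y| < l - k :=
      (isOpen_lt continuous_abs continuous_const).mem_nhds (by exact hx)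
    rcases lt_trichotomy x 0 with hx0 | hx0 | hx0
    · -- x < 0
      have habs : |x| = -x := abs_of_neg hx0
      have h2 : HasDerivAt (fun y : ℝ => -y + k) (-1) x := (hasDerivAt_id x).neg.add_const k
      have h3 := h2.rpow_const (p := β) (Or.inl (ne_of_gt (by linarith)))
      have h4 := ((h3.sub_const (k ^ β)).const_mul (α ^ (p - 1))).neg
      have h1 : HasDerivAt (fun y : ℝ => -(α ^ (p - 1) * ((-y + k) ^ β - k ^ β)))
          (β * α ^ (p - 1) * (|x| + k) ^ (β - 1)) x := by
        refine h4.congr_deriv ?_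
        rw [habs]
        ring
      refine h1.congr_of_eventuallyEq ?_
      filter_upwards [hopen, eventually_lt_nhds hx0] with y hy1 hy2
      rw [hGeq y hy1, Real.sign_of_neg hy2, abs_of_neg hy2]
      ring
    · -- x = 0
      subst hx0
      have hDk : β * α ^ (p - 1) * (|(0:ℝ)| + k) ^ (β - 1) = β * α ^ (p - 1) * k ^ (β - 1) := by
        norm_num
      rw [hDk]
      have hplus : HasDerivAt (fun y : ℝ => α ^ (p - 1) * ((y + k) ^ β - k ^ β))
          (β * α ^ (p - 1) * k ^ (β - 1)) 0 := by
        have h2 : HasDerivAt (fun y : ℝ => y + k) 1 0 := (hasDerivAt_id 0).add_const k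
        have h3 := h2.rpow_const (p := β) (Or.inl (ne_of_gt (by linarith)))
        have h4 := (h3.sub_const (k ^ β)).const_mul (α ^ (p - 1))
        refine h4.congr_deriv ?_
        rw [zero_add]
        ring
      have hminus : HasDerivAt (fun y : ℝ => -(α ^ (p - 1) * ((-y + k) ^ β - k ^ β)))
          (β * α ^ (p - 1) * k ^ (β - 1)) 0 := by
        have h2 : HasDerivAt (fun y : ℝ => -y + k) (-1) 0 := (hasDerivAt_id 0).neg.add_const k
        have h3 := h2.rpow_const (p := β) (Or.inl (ne_of_gt (by linarith)))
        have h4 := ((h3.sub_const (k ^ β)).const_mul (α ^ (p - 1))).neg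
        refine h4.congr_deriv ?_
        rw [neg_zero, zero_add]
        ring
      have hG0 : G 0 = 0 := by
        rw [hGeq 0 (by simpa using hx), Real.sign_zero, zero_mul]
      have hp1 : HasDerivWithinAt G (β * α ^ (p - 1) * k ^ (β - 1)) (Set.Ici 0) 0 := by
        refine hplus.hasDerivWithinAt.congr_of_eventuallyEq ?_ (by simp [hG0])
        filter_upwards [hopen.filter_mono nhdsWithin_le_nhds, self_mem_nhdsWithin]
          with y hy1 hy2
        rcases eq_or_lt_of_le (mem_Ici.mp hy2) with h | h
        · rw [← h]; simp [hG0]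
        · rw [hGeq y hy1, Real.sign_of_pos h, abs_of_pos h, one_mul]
      have hm1 : HasDerivWithinAt G (β * α ^ (p - 1) * k ^ (β - 1)) (Set.Iic 0) 0 := by
        refine hminus.hasDerivWithinAt.congr_of_eventuallyEq ?_ (by simp [hG0])
        filter_upwards [hopen.filter_mono nhdsWithin_le_nhds, self_mem_nhdsWithin]
          with y hy1 hy2
        rcases eq_or_lt_of_le (mem_Iic.mp hy2) with h | h
        · rw [h]; simp [hG0]
        · rw [hGeq y hy1, Real.sign_of_neg h, abs_of_neg h]; ring
      have := hm1.union hp1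
      rw [Set.Iic_union_Ici] at this
      exact hasDerivWithinAt_univ.mp this
    · -- x > 0
      have habs : |x| = x := abs_of_pos hx0
      have h2 : HasDerivAt (fun y : ℝ => y + k) 1 x := (hasDerivAt_id x).add_const k
      have h3 := h2.rpow_const (p := β) (Or.inl (ne_of_gt (by linarith)))
      have h4 := (h3.sub_const (k ^ β)).const_mul (α ^ (p - 1))
      have h1 : HasDerivAt (fun y : ℝ => α ^ (p - 1) * ((y + k) ^ β - k ^ β))
          (β * α ^ (p - 1) * (|x| + k) ^ (β - 1)) x := by
        refine h4.congr_deriv ?_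
        rw [habs]
        ring
      refine h1.congr_of_eventuallyEq ?_
      filter_upwards [hopen, eventually_gt_nhds hx0] with y hy1 hy2
      rw [hGeq y hy1, Real.sign_of_pos hy2, abs_of_pos hy2, one_mul]
  · -- outer case
    intro hx
    have hxk : l < |x| + k := by linarith
    have hc : 0 < α * l ^ (α - 1) := by positivity
    rw [hF' _ (hkx x), if_neg (not_le.mpr hxk)]
    have hGeq : ∀ y : ℝ, l - k < |y| →
        G y = Real.sign y *
          (l ^ (α - 1) * (α * (|y| + k) - (α - 1) * l) * (α * l ^ (α - 1)) ^ (p - 1)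
            - α ^ (p - 1) * k ^ β) := by
      intro y hy
      rw [hG y, hF _ (hkx y), hF' _ (hkx y), if_neg (by push_neg; linarith),
        if_neg (by push_neg; linarith), abs_of_pos hc]
    have hx0 : x ≠ 0 := by
      intro h; rw [h, abs_zero] at hx; linarith
    have hderiv : |α * l ^ (α - 1)| ^ p
        = l ^ (α - 1) * α * (α * l ^ (α - 1)) ^ (p - 1) := by
      rw [abs_of_pos hc, ← rpow_sub_one_mul hc]
      ring
    rcases hx0.lt_or_gt with hx0 | hx0
    · -- x < 0
      have habs : |x| = -x := abs_of_neg hx0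
      have h2 : HasDerivAt (fun y : ℝ => -y + k) (-1) x := (hasDerivAt_id x).neg.add_const k
      have h3 := (h2.const_mul α).sub_const ((α - 1) * l)
      have h4 := ((h3.const_mul (l ^ (α - 1))).mul_const ((α * l ^ (α - 1)) ^ (p - 1)))
      have h5 := (h4.sub_const (α ^ (p - 1) * k ^ β)).neg
      have h1 : HasDerivAt (fun y : ℝ =>
          -(l ^ (α - 1) * (α * (-y + k) - (α - 1) * l) * (α * l ^ (α - 1)) ^ (p - 1)
            - α ^ (p - 1) * k ^ β)) (|α * l ^ (α - 1)| ^ p) x := by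
        refine h5.congr_deriv ?_
        rw [hderiv]
        ring
      refine h1.congr_of_eventuallyEq ?_
      filter_upwards [eventually_lt_nhds (show x < -(l - k) by linarith)] with y hy
      have hyneg : y < 0 := by linarith
      have hyl : l - k < |y| := by rw [abs_of_neg hyneg]; linarith
      rw [hGeq y hyl, Real.sign_of_neg hyneg, abs_of_neg hyneg]
      ring
    · -- x > 0
      have habs : |x| = x := abs_of_pos hx0
      have h2 : HasDerivAt (fun y : ℝ => y + k) 1 x := (hasDerivAt_id x).add_const k
      have h3 := (h2.const_mul α).sub_const ((α - 1) * l)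
      have h4 := ((h3.const_mul (l ^ (α - 1))).mul_const ((α * l ^ (α - 1)) ^ (p - 1)))
      have h5 := h4.sub_const (α ^ (p - 1) * k ^ β)
      have h1 : HasDerivAt (fun y : ℝ =>
          l ^ (α - 1) * (α * (y + k) - (α - 1) * l) * (α * l ^ (α - 1)) ^ (p - 1)
            - α ^ (p - 1) * k ^ β) (|α * l ^ (α - 1)| ^ p) x := by
        refine h5.congr_deriv ?_
        rw [hderiv]
        ring
      refine h1.congr_of_eventuallyEq ?_
      filter_upwards [eventually_gt_nhds (show l - k < x by rw [← habs]; exact hx)] with y hy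
      have hypos : 0 < y := by linarith
      have hyl : l - k < |y| := by rw [abs_of_pos hypos]; linarith
      rw [hGeq y hyl, Real.sign_of_pos hypos, abs_of_pos hypos, one_mul]
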